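/- arXiv:math/0511248 — 3 statements merged into one kernel-verified Lean document; each statement's English description precedes it below -/
import Mathlib

section
/- Every basketball of order n ≥ 2 has at least two ears. -/
open scoped Classical

def IsMatchingOn (M : Finset (Finset ℕ)) (S : Finset ℕ) : Prop :=
  (∀ b ∈ M, b.card = 2) ∧
  (∀ b ∈ M, ∀ b' ∈ M, b ≠ b' → Disjoint b b') ∧
  (∀ x, x ∈ S ↔ ∃ b ∈ M, x ∈ b)

def Cross (e o : Finset ℕ) : Prop :=
  (∃ i ∈ e, ∃ k ∈ e, ∃ j ∈ o, ∃ l ∈ o, i < j ∧ j < k ∧ k < l) ∨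
  (∃ i ∈ o, ∃ k ∈ o, ∃ j ∈ e, ∃ l ∈ e, i < j ∧ j < k ∧ k < l)

def IsNCMatchingOn (M : Finset (Finset ℕ)) (S : Finset ℕ) : Prop :=
  IsMatchingOn M S ∧ ∀ b ∈ M, ∀ b' ∈ M, b ≠ b' → ¬ Cross b b'

def En (n : ℕ) : Finset ℕ := (Finset.range (2 * n)).image (fun i => 2 * i)

def On (n : ℕ) : Finset ℕ := (Finset.range (2 * n)).image (fun i => 2 * i + 1)

def IsBasketball (n : ℕ) (Be Bo : Finset (Finset ℕ)) : Prop :=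
  IsNCMatchingOn Be (En n) ∧ IsNCMatchingOn Bo (On n) ∧
  ∀ e ∈ Be, (Bo.filter (fun o => Cross e o)).card = 1

def IsNCPartitionOn (Q : Finset (Finset ℕ)) (S : Finset ℕ) : Prop :=
  (∀ b ∈ Q, b.Nonempty) ∧
  (∀ b ∈ Q, ∀ b' ∈ Q, b ≠ b' → Disjoint b b') ∧
  (∀ x, x ∈ S ↔ ∃ b ∈ Q, x ∈ b) ∧
  (∀ b ∈ Q, ∀ b' ∈ Q, b ≠ b' → ¬ Cross b b')

/-- An ear of a basketball of order n: a crossing even/odd pair whose four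
elements are consecutive modulo 4n (in some order). -/
def IsEar (n : ℕ) (e o : Finset ℕ) : Prop :=
  Cross e o ∧ ∃ s, e ∪ o =
    ({s % (4 * n), (s + 1) % (4 * n), (s + 2) % (4 * n), (s + 3) % (4 * n)} : Finset ℕ)

lemma cross_comm {e o : Finset ℕ} : Cross e o ↔ Cross o e := by unfold Cross; exact or_comm

lemma cross_pair_iff {a c b d : ℕ} (hac : a < c) (hbd : b < d) :
    Cross {a,c} {b,d} ↔ (a<b ∧ b<c ∧ c<d) ∨ (b<a ∧ a<d ∧ d<c) := by
  constructor
  · rintro (⟨i,hi,k,hk,j,hj,l,hl,h1,h2,h3⟩|⟨i,hi,k,hk,j,hj,l,hl,h1,h2,h3⟩) <;>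
      simp only [Finset.mem_insert, Finset.mem_singleton] at hi hk hj hl <;> omega
  · rintro (⟨h1,h2,h3⟩|⟨h1,h2,h3⟩)
    · exact Or.inl ⟨a, by simp, c, by simp, b, by simp, d, by simp, h1, h2, h3⟩
    · exact Or.inr ⟨b, by simp, d, by simp, a, by simp, c, by simp, h1, h2, h3⟩

lemma exists_sorted_quad (q : Finset ℕ) (h : q.card = 4) :
    ∃ a b c d, a<b ∧ b<c ∧ c<d ∧ q = {a,b,c,d} := by
  have hs := (Finset.sortedLT_sort q).pairwise
  have hl : (q.sort (·≤·)).length = 4 := by rw [Finset.length_sort]; exact h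
  have ht : (q.sort (·≤·)).toFinset = q := Finset.sort_toFinset q _
  rcases e : q.sort (·≤·) with _|⟨a,_|⟨b,_|⟨c,_|⟨d,_|t⟩⟩⟩⟩ <;> rw [e] at hl <;> simp at hl
  rw [e] at hs ht
  simp [List.pairwise_cons] at hs
  exact ⟨a,b,c,d, by omega, by omega, by omega, by rw [← ht]; simp⟩

lemma card_four_sorted {a b c d : ℕ} (h1 : a<b) (h2 : b<c) (h3 : c<d) :
    ({a,b,c,d} : Finset ℕ).card = 4 := by
  rw [Finset.card_insert_of_notMem (by simp; omega),
      Finset.card_insert_of_notMem (by simp; omega),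
      Finset.card_insert_of_notMem (by simp; omega), Finset.card_singleton]

lemma mem_En {n t : ℕ} : t ∈ En n ↔ t % 2 = 0 ∧ t < 4 * n := by
  simp only [En, Finset.mem_image, Finset.mem_range]
  constructor
  · rintro ⟨i, hi, rfl⟩; omega
  · rintro ⟨h1, h2⟩; exact ⟨t / 2, by omega, by omega⟩

lemma mem_On {n t : ℕ} : t ∈ On n ↔ t % 2 = 1 ∧ t < 4 * n := by
  simp only [On, Finset.mem_image, Finset.mem_range]
  constructor
  · rintro ⟨i, hi, rfl⟩; omega
  · rintro ⟨h1, h2⟩; exact ⟨t / 2, by omega, by omega⟩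

lemma pair_rep {M : Finset (Finset ℕ)} {S : Finset ℕ} (hM : IsMatchingOn M S) {b : Finset ℕ}
    (hb : b ∈ M) : ∃ x y, x < y ∧ b = {x, y} := by
  obtain ⟨x, y, hxy, rfl⟩ := Finset.card_eq_two.mp (hM.1 b hb)
  rcases lt_or_gt_of_ne hxy with h | h
  · exact ⟨x, y, h, rfl⟩
  · exact ⟨y, x, h, Finset.pair_comm x y⟩

lemma matching_card {M : Finset (Finset ℕ)} {S : Finset ℕ} (hM : IsMatchingOn M S) :
    S.card = 2 * M.card := by
  have : S = M.biUnion id := by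
    ext t; simp only [Finset.mem_biUnion, id]; exact hM.2.2 t
  rw [this]
  rw [show (M.biUnion id).card = ∑ b ∈ M, b.card from
    Finset.card_biUnion (fun x hx y hy hxy => hM.2.1 x hx y hy hxy)]
  rw [Finset.sum_congr rfl (fun x hx => hM.1 x hx)]
  simp [mul_comm]

lemma card_En (n : ℕ) : (En n).card = 2 * n := by
  rw [En, Finset.card_image_of_injective _ (fun a b h => by omega), Finset.card_range]

lemma card_On (n : ℕ) : (On n).card = 2 * n := by
  rw [On, Finset.card_image_of_injective _ (fun a b h => by omega), Finset.card_range]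

lemma exists_cross {n : ℕ} {Be Bo : Finset (Finset ℕ)} (hB : IsBasketball n Be Bo)
    {o : Finset ℕ} (ho : o ∈ Bo) : ∃ e ∈ Be, Cross e o := by
  by_contra hcon
  push_neg at hcon
  obtain ⟨b, d, hbd, rfl⟩ := pair_rep hB.2.1.1 ho
  have hbO : b ∈ On n := (hB.2.1.1.2.2 b).mpr ⟨_, ho, by simp⟩
  have hdO : d ∈ On n := (hB.2.1.1.2.2 d).mpr ⟨_, ho, by simp⟩
  rw [mem_On] at hbO hdO
  -- interval membership of blocks
  set Eio := (En n) ∩ Finset.Ioo b d with hEio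
  set Oio := (On n) ∩ Finset.Ioo b d with hOio
  -- Eio is a union of blocks of Be
  have hEblocks : Eio = (Be.filter (fun e => e ⊆ Finset.Ioo b d)).biUnion id := by
    ext t
    simp only [hEio, Finset.mem_inter, Finset.mem_biUnion, Finset.mem_filter, id]
    constructor
    · rintro ⟨htE, htI⟩
      obtain ⟨e, he, hte⟩ := (hB.1.1.2.2 t).mp htE
      refine ⟨e, ⟨he, ?_⟩, hte⟩
      obtain ⟨x, y, hxy, rfl⟩ := pair_rep hB.1.1 he
      have hnc := hcon _ he
      rw [cross_pair_iff hxy hbd] at hnc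
      have hxO : x ∈ En n := (hB.1.1.2.2 x).mpr ⟨_, he, by simp⟩
      have hyO : y ∈ En n := (hB.1.1.2.2 y).mpr ⟨_, he, by simp⟩
      rw [mem_En] at hxO hyO
      simp only [Finset.mem_insert, Finset.mem_singleton] at hte
      intro u hu
      simp only [Finset.mem_insert, Finset.mem_singleton] at hu
      simp only [Finset.mem_Ioo] at htI ⊢
      omega
    · rintro ⟨e, ⟨he, hsub⟩, hte⟩
      exact ⟨(hB.1.1.2.2 t).mpr ⟨e, he, hte⟩, hsub hte⟩
  -- Oio is a union of blocks of Bo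
  have hOblocks : Oio = (Bo.filter (fun o' => o' ⊆ Finset.Ioo b d)).biUnion id := by
    ext t
    simp only [hOio, Finset.mem_inter, Finset.mem_biUnion, Finset.mem_filter, id]
    constructor
    · rintro ⟨htO, htI⟩
      obtain ⟨o', ho', hto⟩ := (hB.2.1.1.2.2 t).mp htO
      refine ⟨o', ⟨ho', ?_⟩, hto⟩
      obtain ⟨x, y, hxy, rfl⟩ := pair_rep hB.2.1.1 ho'
      have hne : ({x, y} : Finset ℕ) ≠ {b, d} := by
        intro h
        have : t ∈ ({b, d} : Finset ℕ) := h ▸ hto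
        simp only [Finset.mem_insert, Finset.mem_singleton] at this
        simp only [Finset.mem_Ioo] at htI
        omega
      have hnc := hB.2.1.2 _ ho' _ ho hne
      rw [cross_pair_iff hxy hbd] at hnc
      have hdis := hB.2.1.1.2.1 _ ho' _ ho hne
      rw [Finset.disjoint_left] at hdis
      have hx : x ∉ ({b, d} : Finset ℕ) := hdis (by simp)
      have hy : y ∉ ({b, d} : Finset ℕ) := hdis (by simp)
      simp only [Finset.mem_insert, Finset.mem_singleton] at hx hy hto
      intro u hu
      simp only [Finset.mem_insert, Finset.mem_singleton] at hu
      simp only [Finset.mem_Ioo] at htI ⊢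
      omega
    · rintro ⟨o', ⟨ho', hsub⟩, hto⟩
      exact ⟨(hB.2.1.1.2.2 t).mpr ⟨o', ho', hto⟩, hsub hto⟩
  -- cardinalities
  have hEcard : Eio.card = 2 * (Be.filter (fun e => e ⊆ Finset.Ioo b d)).card := by
    rw [hEblocks]
    rw [show ((Be.filter (fun e => e ⊆ Finset.Ioo b d)).biUnion id).card
        = ∑ e ∈ Be.filter (fun e => e ⊆ Finset.Ioo b d), e.card from
      Finset.card_biUnion (fun x hx y hy hxy =>
        hB.1.1.2.1 x (Finset.mem_filter.mp hx).1 y (Finset.mem_filter.mp hy).1 hxy)]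
    rw [Finset.sum_congr rfl (fun x hx => hB.1.1.1 x (Finset.mem_filter.mp hx).1)]
    simp [mul_comm]
  have hOcard : Oio.card = 2 * (Bo.filter (fun o' => o' ⊆ Finset.Ioo b d)).card := by
    rw [hOblocks]
    rw [show ((Bo.filter (fun o' => o' ⊆ Finset.Ioo b d)).biUnion id).card
        = ∑ e ∈ Bo.filter (fun o' => o' ⊆ Finset.Ioo b d), e.card from
      Finset.card_biUnion (fun x hx y hy hxy =>
        hB.2.1.1.2.1 x (Finset.mem_filter.mp hx).1 y (Finset.mem_filter.mp hy).1 hxy)]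
    rw [Finset.sum_congr rfl (fun x hx => hB.2.1.1.1 x (Finset.mem_filter.mp hx).1)]
    simp [mul_comm]
  -- explicit counts
  have hEcount : Eio.card = (d - b) / 2 := by
    have : Eio = (Finset.range ((d - b) / 2)).image (fun j => b + 1 + 2 * j) := by
      ext t
      simp only [hEio, Finset.mem_inter, Finset.mem_Ioo, Finset.mem_image, Finset.mem_range,
        mem_En]
      constructor
      · rintro ⟨⟨h1, h2⟩, h3, h4⟩; exact ⟨(t - b - 1) / 2, by omega, by omega⟩
      · rintro ⟨j, hj, rfl⟩; omega
    rw [this, Finset.card_image_of_injective _ (fun x y h => by omega), Finset.card_range]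
  have hOcount : Oio.card = (d - b) / 2 - 1 := by
    have : Oio = (Finset.range ((d - b) / 2 - 1)).image (fun j => b + 2 + 2 * j) := by
      ext t
      simp only [hOio, Finset.mem_inter, Finset.mem_Ioo, Finset.mem_image, Finset.mem_range,
        mem_On]
      constructor
      · rintro ⟨⟨h1, h2⟩, h3, h4⟩; exact ⟨(t - b - 2) / 2, by omega, by omega⟩
      · rintro ⟨j, hj, rfl⟩; omega
    rw [this, Finset.card_image_of_injective _ (fun x y h => by omega), Finset.card_range]
  omega

noncomputable def oOf (Bo : Finset (Finset ℕ)) (e : Finset ℕ) : Finset ℕ :=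
  (Bo.filter (fun o => Cross e o)).sup id

lemma oOf_spec {n : ℕ} {Be Bo : Finset (Finset ℕ)} (hB : IsBasketball n Be Bo)
    {e : Finset ℕ} (he : e ∈ Be) :
    oOf Bo e ∈ Bo ∧ Cross e (oOf Bo e) ∧ ∀ o' ∈ Bo, Cross e o' → o' = oOf Bo e := by
  obtain ⟨o, ho⟩ := Finset.card_eq_one.mp (hB.2.2 e he)
  have hoo : oOf Bo e = o := by rw [oOf, ho, Finset.sup_singleton]; rfl
  have hom : o ∈ Bo.filter (fun o => Cross e o) := ho ▸ Finset.mem_singleton_self o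
  rw [Finset.mem_filter] at hom
  refine ⟨hoo ▸ hom.1, hoo ▸ hom.2, fun o' ho' hc => ?_⟩
  have : o' ∈ Bo.filter (fun o => Cross e o) := Finset.mem_filter.mpr ⟨ho', hc⟩
  rw [ho, Finset.mem_singleton] at this
  rw [hoo, this]

lemma oOf_surj {n : ℕ} {Be Bo : Finset (Finset ℕ)} (hB : IsBasketball n Be Bo)
    {o : Finset ℕ} (ho : o ∈ Bo) : ∃ e ∈ Be, oOf Bo e = o := by
  obtain ⟨e, he, hc⟩ := exists_cross hB ho
  exact ⟨e, he, ((oOf_spec hB he).2.2 o ho hc).symm⟩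

lemma oOf_injOn {n : ℕ} {Be Bo : Finset (Finset ℕ)} (hB : IsBasketball n Be Bo)
    {e e' : Finset ℕ} (he : e ∈ Be) (he' : e' ∈ Be) (h : oOf Bo e = oOf Bo e') : e = e' := by
  have himg : Be.image (oOf Bo) = Bo := by
    apply Finset.Subset.antisymm
    · intro o ho
      obtain ⟨e, he, rfl⟩ := Finset.mem_image.mp ho
      exact (oOf_spec hB he).1
    · intro o ho
      obtain ⟨e, he, heo⟩ := oOf_surj hB ho
      exact Finset.mem_image.mpr ⟨e, he, heo⟩
  have h1 : (En n).card = 2 * Be.card := matching_card hB.1.1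
  have h2 : (On n).card = 2 * Bo.card := matching_card hB.2.1.1
  rw [card_En] at h1; rw [card_On] at h2
  have hcards : (Be.image (oOf Bo)).card = Be.card := by rw [himg]; omega
  exact Finset.injOn_of_card_image_eq hcards he he' h

lemma quartet_rep {n : ℕ} {Be Bo : Finset (Finset ℕ)} (hB : IsBasketball n Be Bo)
    {e : Finset ℕ} (he : e ∈ Be) :
    ∃ a b c d, a<b ∧ b<c ∧ c<d ∧ e ∪ oOf Bo e = {a,b,c,d} ∧
      (({a,c} = e ∧ ({b,d} : Finset ℕ) = oOf Bo e) ∨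
       (({a,c} : Finset ℕ) = oOf Bo e ∧ {b,d} = e)) := by
  obtain ⟨x, y, hxy, hxye⟩ := pair_rep hB.1.1 he
  obtain ⟨u, v, huv, huve⟩ := pair_rep hB.2.1.1 (oOf_spec hB he).1
  have hc := (oOf_spec hB he).2.1
  subst hxye
  rw [huve] at hc ⊢
  rw [cross_pair_iff hxy huv] at hc
  rcases hc with ⟨h1, h2, h3⟩ | ⟨h1, h2, h3⟩
  · exact ⟨x, u, y, v, h1, h2, h3, by ext t; simp; tauto, Or.inl ⟨rfl, rfl⟩⟩
  · exact ⟨u, x, v, y, h1, h2, h3, by ext t; simp; tauto, Or.inr ⟨rfl, rfl⟩⟩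

set_option maxHeartbeats 2000000 in

lemma quartet_noncross {a b c d s1 t1 s2 t2 : ℕ}
    (hab : a<b) (hbc : b<c) (hcd : c<d) (hs : s1<t1) (ht : t1<s2) (hs2 : s2<t2)
    (hdis : ∀ x ∈ ({a,b,c,d} : Finset ℕ), x ∉ ({s1,t1,s2,t2} : Finset ℕ))
    (h1 : ¬ Cross {a,c} {s1,s2}) (h2 : ¬ Cross {a,c} {t1,t2})
    (h3 : ¬ Cross {b,d} {s1,s2}) (h4 : ¬ Cross {b,d} {t1,t2}) :
    ¬ Cross {a,b,c,d} {s1,t1,s2,t2} := by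
  rw [cross_pair_iff (by omega) (by omega)] at h1 h2 h3 h4
  have da := hdis a (by simp); have db := hdis b (by simp)
  have dc := hdis c (by simp); have dd := hdis d (by simp)
  simp only [Finset.mem_insert, Finset.mem_singleton, not_or] at da db dc dd
  rintro (⟨i,hi,k,hk,j,hj,l,hl,hh⟩|⟨i,hi,k,hk,j,hj,l,hl,hh⟩) <;>
    simp only [Finset.mem_insert, Finset.mem_singleton] at hi hk hj hl <;>
    rcases hi with rfl|rfl|rfl|rfl <;> rcases hk with rfl|rfl|rfl|rfl <;>
    rcases hj with rfl|rfl|rfl|rfl <;> rcases hl with rfl|rfl|rfl|rfl <;> omega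

noncomputable def spanF (q : Finset ℕ) : ℕ :=
  if h : q.Nonempty then q.max' h - q.min' h else 0

lemma spanF_quad {a b c d : ℕ} (hab : a<b) (hbc : b<c) (hcd : c<d) :
    spanF {a,b,c,d} = d - a := by
  have hne : ({a,b,c,d} : Finset ℕ).Nonempty := ⟨a, by simp⟩
  rw [spanF, dif_pos hne]
  have hmax : ({a,b,c,d} : Finset ℕ).max' hne = d := by
    apply le_antisymm
    · apply Finset.max'_le; intro y hy; simp at hy; omega
    · apply Finset.le_max'; simp
  have hmin : ({a,b,c,d} : Finset ℕ).min' hne = a := by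
    apply le_antisymm
    · apply Finset.min'_le; simp
    · apply Finset.le_min'; intro y hy; simp at hy; omega
  rw [hmax, hmin]

lemma interval_of_min (Q : Finset (Finset ℕ)) (M : ℕ) (hQ : Q.Nonempty)
    (h4 : ∀ q ∈ Q, q.card = 4)
    (hnc : ∀ q ∈ Q, ∀ q' ∈ Q, q ≠ q' → ¬ Cross q q')
    (hdisj : ∀ q ∈ Q, ∀ q' ∈ Q, q ≠ q' → Disjoint q q')
    (hsub : ∀ q ∈ Q, q ⊆ Finset.range M)
    (hcov : ∀ t, t < M → ∃ q ∈ Q, t ∈ q) :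
    ∃ q ∈ Q, ∃ s, q = {s, s+1, s+2, s+3} ∧ s + 3 < M := by
  obtain ⟨q, hq, hmin⟩ := Q.exists_min_image spanF hQ
  obtain ⟨a, b, c, d, hab, hbc, hcd, hrep⟩ := exists_sorted_quad q (h4 q hq)
  have hdM : d < M := by
    have := hsub q hq (by rw [hrep]; simp : d ∈ q)
    simpa using this
  by_cases hda : d = a + 3
  · have hb : b = a + 1 := by omega
    have hc : c = a + 2 := by omega
    exact ⟨q, hq, a, by rw [hrep, hb, hc, hda], by omega⟩
  · exfalso
    have hd4 : a + 4 ≤ d := by omega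
    -- find a point inside the hull not in q
    have hqi : q ∩ Finset.Ioo a d ⊆ {b, c} := by
      intro t ht
      rw [Finset.mem_inter, hrep] at ht
      simp only [Finset.mem_insert, Finset.mem_singleton, Finset.mem_Ioo] at ht ⊢
      omega
    have hex : ∃ t ∈ Finset.Ioo a d, t ∉ q := by
      by_contra hno
      push_neg at hno
      have hss : Finset.Ioo a d ⊆ {b, c} := fun t ht =>
        hqi (Finset.mem_inter.mpr ⟨hno t ht, ht⟩)
      have := Finset.card_le_card hss
      rw [Nat.card_Ioo] at this
      have : ({b, c} : Finset ℕ).card ≤ 2 := Finset.card_insert_le _ _ |>.trans (by simp)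
      have := Finset.card_le_card hss
      rw [Nat.card_Ioo] at this
      omega
    obtain ⟨t, htI, htq⟩ := hex
    rw [Finset.mem_Ioo] at htI
    obtain ⟨q', hq', htq'⟩ := hcov t (by omega)
    have hne : q ≠ q' := fun h => htq (h ▸ htq')
    have haq : a ∈ q := by rw [hrep]; simp
    have hdq : d ∈ q := by rw [hrep]; simp
    -- q' is contained in the open hull of q
    have hq'sub : ∀ u ∈ q', a < u ∧ u < d := by
      intro u hu
      have hua : u ≠ a := fun h => (Finset.disjoint_right.mp (hdisj q hq q' hq' hne)) hu (h ▸ haq)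
      have hud : u ≠ d := fun h => (Finset.disjoint_right.mp (hdisj q hq q' hq' hne)) hu (h ▸ hdq)
      by_contra hcon
      have : u < a ∨ d < u := by omega
      rcases this with h | h
      · exact hnc q hq q' hq' hne
          (Or.inr ⟨u, hu, t, htq', a, haq, d, hdq, by omega, by omega, by omega⟩)
      · exact hnc q hq q' hq' hne
          (Or.inl ⟨a, haq, d, hdq, t, htq', u, hu, by omega, by omega, by omega⟩)
    -- q' has strictly smaller span
    obtain ⟨a', b', c', d', hab', hbc', hcd', hrep'⟩ := exists_sorted_quad q' (h4 q' hq')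
    have ha' := hq'sub a' (by rw [hrep']; simp)
    have hd' := hq'sub d' (by rw [hrep']; simp)
    have hspan := hmin q' hq'
    rw [hrep, hrep', spanF_quad hab hbc hcd, spanF_quad hab' hbc' hcd'] at hspan
    omega

def rot (m r t : ℕ) : ℕ := (t + r) % m

lemma rot_lt {m r t : ℕ} (hm : 0 < m) : rot m r t < m := Nat.mod_lt _ hm

lemma rot_inj {m r t s : ℕ} (ht : t < m) (hs : s < m) (h : rot m r t = rot m r s) : t = s := by
  unfold rot at h
  have h2 : (t + r) % m = (s + r) % m := h
  have h3 : t % m = s % m := by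
    have := Nat.ModEq.add_right_cancel' r (h2 : (t + r) ≡ (s + r) [MOD m])
    exact this
  rwa [Nat.mod_eq_of_lt ht, Nat.mod_eq_of_lt hs] at h3

lemma rot_rot {m r t : ℕ} (hr : r ≤ m) (ht : t < m) : rot m r (rot m (m - r) t) = t := by
  unfold rot
  have : (t + (m - r)) % m + r ≡ t + (m - r) + r [MOD m] :=
    (Nat.mod_modEq _ m).add_right r
  have h2 : (t + (m - r)) % m + r ≡ t + m [MOD m] := by
    rwa [show t + (m - r) + r = t + m by omega] at this
  have h3 : ((t + (m - r)) % m + r) % m = (t + m) % m := h2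
  rw [h3, Nat.add_mod_right, Nat.mod_eq_of_lt ht]

lemma rot_rot' {m r t : ℕ} (hr : r ≤ m) (ht : t < m) : rot m (m - r) (rot m r t) = t := by
  unfold rot
  have h2 : (t + r) % m + (m - r) ≡ t + m [MOD m] := by
    have := (Nat.mod_modEq (t + r) m).add_right (m - r)
    rwa [show t + r + (m - r) = t + m by omega] at this
  have h3 : ((t + r) % m + (m - r)) % m = (t + m) % m := h2
  rw [h3, Nat.add_mod_right, Nat.mod_eq_of_lt ht]

lemma rot1_cross_aux {m : ℕ} {q q' : Finset ℕ} (hq : q ⊆ Finset.range m)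
    (hq' : q' ⊆ Finset.range m)
    (h : ∃ i ∈ q.image (rot m 1), ∃ k ∈ q.image (rot m 1), ∃ j ∈ q'.image (rot m 1),
      ∃ l ∈ q'.image (rot m 1), i < j ∧ j < k ∧ k < l) :
    Cross q q' := by
  obtain ⟨i, hi, k, hk, j, hj, l, hl, h1, h2, h3⟩ := h
  obtain ⟨i0, hi0, rfl⟩ := Finset.mem_image.mp hi
  obtain ⟨k0, hk0, rfl⟩ := Finset.mem_image.mp hk
  obtain ⟨j0, hj0, rfl⟩ := Finset.mem_image.mp hj
  obtain ⟨l0, hl0, rfl⟩ := Finset.mem_image.mp hl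
  have hi0m := Finset.mem_range.mp (hq hi0)
  have hk0m := Finset.mem_range.mp (hq hk0)
  have hj0m := Finset.mem_range.mp (hq' hj0)
  have hl0m := Finset.mem_range.mp (hq' hl0)
  have key : ∀ u < m, rot m 1 u = 0 ∧ u + 1 = m ∨ rot m 1 u = u + 1 ∧ u + 1 < m := by
    intro u hu
    rcases Nat.lt_or_ge (u + 1) m with h | h
    · exact Or.inr ⟨Nat.mod_eq_of_lt h, h⟩
    · have : u + 1 = m := by omega
      exact Or.inl ⟨by rw [rot, this, Nat.mod_self], this⟩
  have Ki := key i0 hi0m; have Kk := key k0 hk0m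
  have Kj := key j0 hj0m; have Kl := key l0 hl0m
  rcases Ki with ⟨hi1, hi2⟩ | ⟨hi1, hi2⟩ <;> rcases Kk with ⟨hk1, hk2⟩ | ⟨hk1, hk2⟩ <;>
    rcases Kj with ⟨hj1, hj2⟩ | ⟨hj1, hj2⟩ <;> rcases Kl with ⟨hl1, hl2⟩ | ⟨hl1, hl2⟩ <;>
    rw [hi1] at h1 <;> rw [hj1] at h1 h2 <;> rw [hk1] at h2 h3 <;> rw [hl1] at h3
  all_goals first
    | omega
    | exact Or.inl ⟨i0, hi0, k0, hk0, j0, hj0, l0, hl0, by omega, by omega, by omega⟩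
    | exact Or.inr ⟨j0, hj0, l0, hl0, k0, hk0, i0, hi0, by omega, by omega, by omega⟩

lemma rot1_cross {m : ℕ} {q q' : Finset ℕ} (hq : q ⊆ Finset.range m)
    (hq' : q' ⊆ Finset.range m)
    (h : Cross (q.image (rot m 1)) (q'.image (rot m 1))) : Cross q q' := by
  rcases h with h | h
  · exact rot1_cross_aux hq hq' h
  · exact cross_comm.mp (rot1_cross_aux hq' hq h)

lemma image_rot_subset {m r : ℕ} (hm : 0 < m) (q : Finset ℕ) :
    q.image (rot m r) ⊆ Finset.range m := by
  intro u hu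
  obtain ⟨t, _, rfl⟩ := Finset.mem_image.mp hu
  exact Finset.mem_range.mpr (rot_lt hm)

lemma image_rot_succ {m r : ℕ} (q : Finset ℕ) :
    q.image (rot m (r + 1)) = (q.image (rot m r)).image (rot m 1) := by
  rw [Finset.image_image]
  apply Finset.image_congr
  intro t _
  show (t + (r + 1)) % m = ((t + r) % m + 1) % m
  conv_rhs => rw [show ((t + r) % m + 1) % m = (t + r + 1) % m from
    ((Nat.mod_modEq (t + r) m).add_right 1 : _)]
  rw [show t + (r + 1) = t + r + 1 by omega]

lemma rotr_cross {m : ℕ} (r : ℕ) {q q' : Finset ℕ} (hm : 0 < m) (hq : q ⊆ Finset.range m)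
    (hq' : q' ⊆ Finset.range m)
    (h : Cross (q.image (rot m r)) (q'.image (rot m r))) : Cross q q' := by
  induction r with
  | zero =>
    have e1 : q.image (rot m 0) = q := by
      rw [show q.image (rot m 0) = q.image id from Finset.image_congr (fun t ht =>
        Nat.mod_eq_of_lt (Finset.mem_range.mp (hq ht)) : _), Finset.image_id]
    have e2 : q'.image (rot m 0) = q' := by
      rw [show q'.image (rot m 0) = q'.image id from Finset.image_congr (fun t ht =>
        Nat.mod_eq_of_lt (Finset.mem_range.mp (hq' ht)) : _), Finset.image_id]
    rwa [e1, e2] at h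
  | succ r ih =>
    rw [image_rot_succ (r := r) (q := q), image_rot_succ (r := r) (q := q')] at h
    exact ih (rot1_cross (image_rot_subset hm q) (image_rot_subset hm q') h)

lemma image_rot_inv {m r : ℕ} (hr : r ≤ m) {q : Finset ℕ} (hq : q ⊆ Finset.range m) :
    (q.image (rot m r)).image (rot m (m - r)) = q := by
  rw [Finset.image_image]
  rw [show q.image (rot m (m - r) ∘ rot m r) = q.image id from Finset.image_congr
    (fun t ht => rot_rot' hr (Finset.mem_range.mp (hq ht)) : _), Finset.image_id]

lemma image_rot_disjoint {m r : ℕ} {q q' : Finset ℕ} (hq : q ⊆ Finset.range m)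
    (hq' : q' ⊆ Finset.range m) (hd : Disjoint q q') :
    Disjoint (q.image (rot m r)) (q'.image (rot m r)) := by
  rw [Finset.disjoint_left]
  intro u hu hu'
  obtain ⟨t, ht, rfl⟩ := Finset.mem_image.mp hu
  obtain ⟨s, hs, he⟩ := Finset.mem_image.mp hu'
  have := rot_inj (Finset.mem_range.mp (hq' hs)) (Finset.mem_range.mp (hq ht)) he
  exact Finset.disjoint_left.mp hd ht (this ▸ hs)

lemma image_quad {f : ℕ → ℕ} {a b c d : ℕ} :
    ({a,b,c,d} : Finset ℕ).image f = {f a, f b, f c, f d} := by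
  simp [Finset.image_insert]

lemma two_ears {m : ℕ} (hm : 8 ≤ m) (Q : Finset (Finset ℕ)) (hQ2 : 2 ≤ Q.card)
    (h4 : ∀ q ∈ Q, q.card = 4)
    (hnc : ∀ q ∈ Q, ∀ q' ∈ Q, q ≠ q' → ¬ Cross q q')
    (hdisj : ∀ q ∈ Q, ∀ q' ∈ Q, q ≠ q' → Disjoint q q')
    (hsub : ∀ q ∈ Q, q ⊆ Finset.range m)
    (hcov : ∀ t, t < m → ∃ q ∈ Q, t ∈ q) :
    ∃ q1 ∈ Q, ∃ q2 ∈ Q, q1 ≠ q2 ∧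
      (∃ s, q1 = {s % m, (s+1) % m, (s+2) % m, (s+3) % m}) ∧
      (∃ s, q2 = {s % m, (s+1) % m, (s+2) % m, (s+3) % m}) := by
  have hm0 : 0 < m := by omega
  obtain ⟨q1, hq1, w, hq1rep, hwm⟩ := interval_of_min Q m
    (Finset.card_pos.mp (by omega)) h4 hnc hdisj hsub hcov
  set r := m - (w + 4) with hr
  have hrm : r ≤ m := by omega
  -- the rotated family
  set ρ : ℕ → ℕ := rot m r with hρ
  set T : Finset ℕ := {m-4, m-3, m-2, m-1} with hT
  have hQsub : ∀ q ∈ Q, q ⊆ Finset.range m := hsub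
  have hTrep : q1.image ρ = T := by
    rw [hq1rep, image_quad]
    have e0 : ρ w = m - 4 := by
      show (w + r) % m = m - 4
      rw [show w + r = m - 4 by omega, Nat.mod_eq_of_lt (by omega)]
    have e1 : ρ (w+1) = m - 3 := by
      show (w + 1 + r) % m = m - 3
      rw [show w + 1 + r = m - 3 by omega, Nat.mod_eq_of_lt (by omega)]
    have e2 : ρ (w+2) = m - 2 := by
      show (w + 2 + r) % m = m - 2
      rw [show w + 2 + r = m - 2 by omega, Nat.mod_eq_of_lt (by omega)]
    have e3 : ρ (w+3) = m - 1 := by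
      show (w + 3 + r) % m = m - 1
      rw [show w + 3 + r = m - 1 by omega, Nat.mod_eq_of_lt (by omega)]
    rw [e0, e1, e2, e3]
  set Q' : Finset (Finset ℕ) := Q.image (fun q => q.image ρ) with hQ'
  have hmemQ' : ∀ p, p ∈ Q' → ∃ q ∈ Q, p = q.image ρ := by
    intro p hp
    obtain ⟨q, hq, hqe⟩ := Finset.mem_image.mp hp
    exact ⟨q, hq, hqe.symm⟩
  have hblockinj : ∀ q ∈ Q, ∀ p ∈ Q, q.image ρ = p.image ρ → q = p := by
    intro q hq p hp h
    have := congrArg (Finset.image (rot m (m - r))) h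
    rwa [image_rot_inv hrm (hsub q hq), image_rot_inv hrm (hsub p hp)] at this
  have hcardQ' : Q'.card = Q.card :=
    Finset.card_image_of_injOn (fun q hq p hp h => hblockinj q hq p hp h)
  set Q'' : Finset (Finset ℕ) := Q'.erase T with hQ''
  have hTQ' : T ∈ Q' := by
    rw [← hTrep]; exact Finset.mem_image_of_mem _ hq1
  have hQ''card : 1 ≤ Q''.card := by
    rw [hQ'', Finset.card_erase_of_mem hTQ', hcardQ']
    omega
  -- disjointness and subsets for Q'
  have hdisj' : ∀ p ∈ Q', ∀ p' ∈ Q', p ≠ p' → Disjoint p p' := by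
    intro p hp p' hp' hne
    obtain ⟨q, hq, rfl⟩ := hmemQ' p hp
    obtain ⟨q', hq', rfl⟩ := hmemQ' p' hp'
    have : q ≠ q' := fun h => hne (h ▸ rfl)
    exact image_rot_disjoint (hsub q hq) (hsub q' hq') (hdisj q hq q' hq' this)
  have hsub' : ∀ p ∈ Q', p ⊆ Finset.range m := by
    intro p hp
    obtain ⟨q, hq, rfl⟩ := hmemQ' p hp
    exact image_rot_subset hm0 q
  -- second interval block
  obtain ⟨q2', hq2', u, hq2rep, hum⟩ := interval_of_min Q'' (m - 4)
    (Finset.card_pos.mp (by omega))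
    (by
      intro p hp
      obtain ⟨q, hq, rfl⟩ := hmemQ' p (Finset.mem_of_mem_erase hp)
      rw [Finset.card_image_of_injOn]
      · exact h4 q hq
      · intro x hx y hy h
        exact rot_inj (Finset.mem_range.mp (hsub q hq hx))
          (Finset.mem_range.mp (hsub q hq hy)) h)
    (by
      intro p hp p' hp' hne hcross
      obtain ⟨q, hq, rfl⟩ := hmemQ' p (Finset.mem_of_mem_erase hp)
      obtain ⟨q', hq', rfl⟩ := hmemQ' p' (Finset.mem_of_mem_erase hp')
      have hne2 : q ≠ q' := fun h => hne (h ▸ rfl)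
      exact hnc q hq q' hq' hne2 (rotr_cross r hm0 (hsub q hq) (hsub q' hq') hcross))
    (fun p hp p' hp' hne =>
      hdisj' p (Finset.mem_of_mem_erase hp) p' (Finset.mem_of_mem_erase hp') hne)
    (by
      intro p hp
      intro t ht
      have h1 : t < m := Finset.mem_range.mp (hsub' p (Finset.mem_of_mem_erase hp) ht)
      have hne : p ≠ T := Finset.ne_of_mem_erase hp
      have hdis := hdisj' p (Finset.mem_of_mem_erase hp) T hTQ' hne
      have : t ∉ T := Finset.disjoint_left.mp hdis ht
      rw [hT] at this
      simp only [Finset.mem_insert, Finset.mem_singleton] at this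
      exact Finset.mem_range.mpr (by omega))
    (by
      intro t ht
      have htm : t < m := by omega
      set t0 := rot m (m - r) t with ht0
      have ht0m : t0 < m := rot_lt hm0
      obtain ⟨q, hq, hq0⟩ := hcov t0 ht0m
      have hteq : ρ t0 = t := rot_rot hrm htm
      have htmem : t ∈ q.image ρ := hteq ▸ Finset.mem_image_of_mem ρ hq0
      refine ⟨q.image ρ, Finset.mem_erase.mpr ⟨?_, Finset.mem_image_of_mem _ hq⟩, htmem⟩
      intro hqT
      rw [hqT, hT] at htmem
      simp only [Finset.mem_insert, Finset.mem_singleton] at htmem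
      omega)
  -- pull q2 back
  obtain ⟨q2, hq2Q, hq2e⟩ := hmemQ' q2' (Finset.mem_of_mem_erase hq2')
  have hq2ne : q2 ≠ q1 := by
    intro h
    subst h
    exact Finset.ne_of_mem_erase hq2' (hq2e ▸ hTrep)
  have hq2form : q2 = {(u + (m - r)) % m, (u + (m - r) + 1) % m,
      (u + (m - r) + 2) % m, (u + (m - r) + 3) % m} := by
    have : q2 = (q2.image ρ).image (rot m (m - r)) := (image_rot_inv hrm (hsub q2 hq2Q)).symm
    have g1 : rot m (m-r) (u+1) = (u + (m - r) + 1) % m := by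
      show (u + 1 + (m - r)) % m = (u + (m - r) + 1) % m
      rw [show u + 1 + (m - r) = u + (m - r) + 1 by omega]
    have g2 : rot m (m-r) (u+2) = (u + (m - r) + 2) % m := by
      show (u + 2 + (m - r)) % m = (u + (m - r) + 2) % m
      rw [show u + 2 + (m - r) = u + (m - r) + 2 by omega]
    have g3 : rot m (m-r) (u+3) = (u + (m - r) + 3) % m := by
      show (u + 3 + (m - r)) % m = (u + (m - r) + 3) % m
      rw [show u + 3 + (m - r) = u + (m - r) + 3 by omega]
    rw [this, ← hq2e, hq2rep, image_quad, g1, g2, g3]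
    rfl
  refine ⟨q1, hq1, q2, hq2Q, fun h => hq2ne h.symm, ⟨w, ?_⟩, ⟨u + (m - r), hq2form⟩⟩
  rw [hq1rep]
  rw [Nat.mod_eq_of_lt (by omega : w < m), Nat.mod_eq_of_lt (by omega : w + 1 < m),
    Nat.mod_eq_of_lt (by omega : w + 2 < m), Nat.mod_eq_of_lt (by omega : w + 3 < m)]

theorem stmt_8 (n : ℕ) (hn : 2 ≤ n) (Be Bo : Finset (Finset ℕ))
    (hB : IsBasketball n Be Bo) :
    ∃ e₁ ∈ Be, ∃ o₁ ∈ Bo, ∃ e₂ ∈ Be, ∃ o₂ ∈ Bo,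
      IsEar n e₁ o₁ ∧ IsEar n e₂ o₂ ∧ (e₁ ≠ e₂ ∨ o₁ ≠ o₂) := by
  classical
  set Q : Finset (Finset ℕ) := Be.image (fun e => e ∪ oOf Bo e) with hQdef
  -- elements of a block: parity determines the side
  have heven : ∀ e ∈ Be, ∀ t ∈ e, t % 2 = 0 := by
    intro e he t ht
    have := (hB.1.1.2.2 t).mpr ⟨e, he, ht⟩
    exact (mem_En.mp this).1
  have hodd : ∀ o ∈ Bo, ∀ t ∈ o, t % 2 = 1 := by
    intro o ho t ht
    have := (hB.2.1.1.2.2 t).mpr ⟨o, ho, ht⟩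
    exact (mem_On.mp this).1
  have hrecover : ∀ e ∈ Be, ∀ e' ∈ Be, e ∪ oOf Bo e = e' ∪ oOf Bo e' → e = e' := by
    intro e he e' he' h
    ext t
    constructor
    · intro ht
      have : t ∈ e' ∪ oOf Bo e' := h ▸ Finset.mem_union_left _ ht
      rcases Finset.mem_union.mp this with h2 | h2
      · exact h2
      · have := hodd _ (oOf_spec hB he').1 t h2
        have := heven e he t ht
        omega
    · intro ht
      have : t ∈ e ∪ oOf Bo e := h ▸ Finset.mem_union_left _ ht
      rcases Finset.mem_union.mp this with h2 | h2
      · exact h2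
      · have := hodd _ (oOf_spec hB he).1 t h2
        have := heven e' he' t ht
        omega
  have hmemQ : ∀ p ∈ Q, ∃ e ∈ Be, p = e ∪ oOf Bo e := by
    intro p hp
    obtain ⟨e, he, hpe⟩ := Finset.mem_image.mp hp
    exact ⟨e, he, hpe.symm⟩
  have hQcard : Q.card = Be.card :=
    Finset.card_image_of_injOn (fun e he e' he' h => hrecover e he e' he' h)
  have hBecard : Be.card = n := by
    have h1 : (En n).card = 2 * Be.card := matching_card hB.1.1
    rw [card_En] at h1; omega
  -- block disjointness
  have hdisjQ : ∀ p ∈ Q, ∀ p' ∈ Q, p ≠ p' → Disjoint p p' := by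
    intro p hp p' hp' hne
    obtain ⟨e, he, rfl⟩ := hmemQ p hp
    obtain ⟨e', he', rfl⟩ := hmemQ p' hp'
    have hnee : e ≠ e' := fun h => hne (h ▸ rfl)
    have hneo : oOf Bo e ≠ oOf Bo e' := fun h => hnee (oOf_injOn hB he he' h)
    rw [Finset.disjoint_left]
    intro t ht ht'
    rcases Finset.mem_union.mp ht with h1 | h1 <;> rcases Finset.mem_union.mp ht' with h2 | h2
    · exact Finset.disjoint_left.mp (hB.1.1.2.1 e he e' he' hnee) h1 h2
    · have := heven e he t h1; have := hodd _ (oOf_spec hB he').1 t h2; omega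
    · have := hodd _ (oOf_spec hB he).1 t h1; have := heven e' he' t h2; omega
    · exact Finset.disjoint_left.mp
        (hB.2.1.1.2.1 _ (oOf_spec hB he).1 _ (oOf_spec hB he').1 hneo) h1 h2
  -- block noncrossing
  have hncQ : ∀ p ∈ Q, ∀ p' ∈ Q, p ≠ p' → ¬ Cross p p' := by
    intro p hp p' hp' hne
    obtain ⟨e, he, rfl⟩ := hmemQ p hp
    obtain ⟨e', he', rfl⟩ := hmemQ p' hp'
    have hnee : e ≠ e' := fun h => hne (h ▸ rfl)
    have hneo : oOf Bo e ≠ oOf Bo e' := fun h => hnee (oOf_injOn hB he he' h)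
    have hEE : ¬ Cross e e' := hB.1.2 e he e' he' hnee
    have hOO : ¬ Cross (oOf Bo e) (oOf Bo e') :=
      hB.2.1.2 _ (oOf_spec hB he).1 _ (oOf_spec hB he').1 hneo
    have hEO : ¬ Cross e (oOf Bo e') := by
      intro hc
      exact hneo ((oOf_spec hB he).2.2 _ (oOf_spec hB he').1 hc).symm
    have hOE : ¬ Cross (oOf Bo e) e' := by
      intro hc
      exact hneo ((oOf_spec hB he').2.2 _ (oOf_spec hB he).1 (cross_comm.mp hc))
    obtain ⟨a, b, c, d, hab, hbc, hcd, hrep, hpr⟩ := quartet_rep hB he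
    obtain ⟨a', b', c', d', hab', hbc', hcd', hrep', hpr'⟩ := quartet_rep hB he'
    rw [hrep, hrep']
    have hdis : ∀ x ∈ ({a,b,c,d} : Finset ℕ), x ∉ ({a',b',c',d'} : Finset ℕ) := by
      intro x hx
      have := hdisjQ _ hp _ hp' hne
      rw [hrep, hrep'] at this
      exact Finset.disjoint_left.mp this hx
    rcases hpr with ⟨p1, p2⟩ | ⟨p1, p2⟩ <;> rcases hpr' with ⟨p1', p2'⟩ | ⟨p1', p2'⟩ <;>
      apply quartet_noncross hab hbc hcd hab' hbc' hcd' hdis <;>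
      simp only [p1, p2, p1', p2'] <;>
      first
        | exact hEE | exact hOO | exact hEO | exact hOE
        | exact fun hc => hEO (cross_comm.mp hc)
        | exact fun hc => hOE (cross_comm.mp hc)
        | exact fun hc => hEE (cross_comm.mp hc)
        | exact fun hc => hOO (cross_comm.mp hc)
  -- cover
  have hcovQ : ∀ t, t < 4 * n → ∃ p ∈ Q, t ∈ p := by
    intro t ht
    rcases Nat.even_or_odd t with hpar | hpar
    · have : t ∈ En n := mem_En.mpr ⟨Nat.even_iff.mp hpar, ht⟩
      obtain ⟨e, he, hte⟩ := (hB.1.1.2.2 t).mp this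
      exact ⟨e ∪ oOf Bo e, Finset.mem_image_of_mem _ he, Finset.mem_union_left _ hte⟩
    · have : t ∈ On n := mem_On.mpr ⟨Nat.odd_iff.mp hpar, ht⟩
      obtain ⟨o, ho, hto⟩ := (hB.2.1.1.2.2 t).mp this
      obtain ⟨e, he, heo⟩ := oOf_surj hB ho
      exact ⟨e ∪ oOf Bo e, Finset.mem_image_of_mem _ he,
        Finset.mem_union_right _ (heo ▸ hto)⟩
  have h4Q : ∀ p ∈ Q, p.card = 4 := by
    intro p hp
    obtain ⟨e, he, rfl⟩ := hmemQ p hp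
    obtain ⟨a, b, c, d, hab, hbc, hcd, hrep, -⟩ := quartet_rep hB he
    rw [hrep]; exact card_four_sorted hab hbc hcd
  have hsubQ : ∀ p ∈ Q, p ⊆ Finset.range (4 * n) := by
    intro p hp t ht
    obtain ⟨e, he, rfl⟩ := hmemQ p hp
    rcases Finset.mem_union.mp ht with h1 | h1
    · exact Finset.mem_range.mpr (mem_En.mp ((hB.1.1.2.2 t).mpr ⟨e, he, h1⟩)).2
    · exact Finset.mem_range.mpr
        (mem_On.mp ((hB.2.1.1.2.2 t).mpr ⟨_, (oOf_spec hB he).1, h1⟩)).2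
  obtain ⟨q1, hq1, q2, hq2, hq12, ⟨s1, hs1⟩, ⟨s2, hs2⟩⟩ :=
    two_ears (m := 4 * n) (by omega) Q (by omega) h4Q hncQ hdisjQ hsubQ hcovQ
  obtain ⟨e1, he1, hq1e⟩ := hmemQ q1 hq1
  obtain ⟨e2, he2, hq2e⟩ := hmemQ q2 hq2
  refine ⟨e1, he1, oOf Bo e1, (oOf_spec hB he1).1, e2, he2, oOf Bo e2, (oOf_spec hB he2).1,
    ⟨(oOf_spec hB he1).2.1, s1, by rw [← hq1e]; exact hs1⟩,
    ⟨(oOf_spec hB he2).2.1, s2, by rw [← hq2e]; exact hs2⟩, Or.inl ?_⟩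
  intro h
  exact hq12 (by rw [hq1e, hq2e, h])
end

section
/- If a complex polynomial f has no repeated roots, then the curve C_θ(f) = {z : Im(e^{-iθ} f(z)) = 0} is singular for at most deg(f) - 1 values of θ in ℝ/πℤ. If f has a repeated root, then C_θ(f) is singular for every θ. -/
/-- The curve `C_θ(f)` is singular iff some critical point of `f` lies on it. -/
def CurveSingular (f : Polynomial ℂ) (θ : ℝ) : Prop :=
  ∃ z : ℂ, (Complex.exp (-(θ : ℂ) * Complex.I) * f.eval z).im = 0 ∧
    f.derivative.eval z = 0

lemma im_exp_mul (θ : ℝ) (w : ℂ) :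
    (Complex.exp (-(θ : ℂ) * Complex.I) * w).im = ‖w‖ * Real.sin (w.arg - θ) := by
  conv_lhs => rw [← Complex.norm_mul_exp_arg_mul_I w]
  rw [mul_comm (Complex.exp _), mul_assoc, ← Complex.exp_add]
  have : (w.arg : ℂ) * Complex.I + -(θ : ℂ) * Complex.I = ((w.arg - θ : ℝ) : ℂ) * Complex.I := by
    push_cast; ring
  rw [this, Complex.im_ofReal_mul, Complex.exp_ofReal_mul_I_im]

theorem stmt_12 (f : Polynomial ℂ) (n : ℕ) (hn : 1 ≤ n) (hdeg : f.natDegree = n) :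
    (f.roots.Nodup →
      {θ ∈ Set.Ico 0 Real.pi | CurveSingular f θ}.Finite ∧
      {θ ∈ Set.Ico 0 Real.pi | CurveSingular f θ}.ncard ≤ n - 1) ∧
    (¬ f.roots.Nodup → ∀ θ : ℝ, CurveSingular f θ) := by
  have hf0 : f ≠ 0 := by
    intro h; rw [h, Polynomial.natDegree_zero] at hdeg; omega
  have hd0 : f.derivative ≠ 0 := by
    intro h
    have := Polynomial.natDegree_eq_zero_of_derivative_eq_zero h
    omega
  constructor
  · intro hnodup
    -- critical points of f with f(z) ≠ 0 map to at most one θ in [0, π)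
    set g : ℂ → ℝ := fun z => Real.pi * Int.fract ((f.eval z).arg / Real.pi)
    have hsub : {θ ∈ Set.Ico 0 Real.pi | CurveSingular f θ} ⊆
        g '' (f.derivative.roots.toFinset : Set ℂ) := by
      rintro θ ⟨⟨hθ0, hθπ⟩, z, him, hcrit⟩
      have hwne : f.eval z ≠ 0 := by
        intro hw
        have h2 : 1 < f.rootMultiplicity z :=
          (Polynomial.one_lt_rootMultiplicity_iff_isRoot hf0).2 ⟨hw, hcrit⟩
        have := Polynomial.count_roots (a := z) f
        have hle := Multiset.nodup_iff_count_le_one.1 hnodup z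
        omega
      refine ⟨z, ?_, ?_⟩
      · simp only [Multiset.mem_toFinset, Finset.coe_sort_coe, Finset.mem_coe,
          Multiset.mem_toFinset]
        rw [Polynomial.mem_roots hd0]
        exact hcrit
      · rw [im_exp_mul] at him
        have habs : ‖f.eval z‖ ≠ 0 := by simpa using hwne
        have hsin : Real.sin ((f.eval z).arg - θ) = 0 := by
          rcases mul_eq_zero.1 him with h | h
          · exact absurd h habs
          · exact h
        obtain ⟨k, hk⟩ := Real.sin_eq_zero_iff.1 hsin
        have hπ : (0:ℝ) < Real.pi := Real.pi_pos
        have hfract : Int.fract ((f.eval z).arg / Real.pi) = θ / Real.pi := by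
          have harg : (f.eval z).arg / Real.pi = θ / Real.pi + k := by
            field_simp
            linarith [hk]
          rw [harg, Int.fract_add_intCast]
          rw [Int.fract_eq_self]
          constructor
          · positivity
          · rw [div_lt_one hπ]; exact hθπ
        show Real.pi * Int.fract ((f.eval z).arg / Real.pi) = θ
        rw [hfract]
        field_simp
    have hfin : (g '' (f.derivative.roots.toFinset : Set ℂ)).Finite :=
      (f.derivative.roots.toFinset.finite_toSet).image g
    refine ⟨hfin.subset hsub, ?_⟩
    calc {θ ∈ Set.Ico 0 Real.pi | CurveSingular f θ}.ncard
        ≤ (g '' (f.derivative.roots.toFinset : Set ℂ)).ncard :=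
          Set.ncard_le_ncard hsub hfin
      _ ≤ (f.derivative.roots.toFinset : Set ℂ).ncard :=
          Set.ncard_image_le (f.derivative.roots.toFinset.finite_toSet)
      _ = f.derivative.roots.toFinset.card := by
          rw [Set.ncard_coe_finset]
      _ ≤ Multiset.card f.derivative.roots := f.derivative.roots.toFinset_card_le
      _ ≤ f.derivative.natDegree := f.derivative.card_roots'
      _ ≤ f.natDegree - 1 := Polynomial.natDegree_derivative_le f
      _ = n - 1 := by rw [hdeg]
  · intro hnotnodup θ
    obtain ⟨z, hz⟩ : ∃ z, 1 < Multiset.count z f.roots := by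
      by_contra h
      push_neg at h
      exact hnotnodup (Multiset.nodup_iff_count_le_one.2 h)
    rw [Polynomial.count_roots] at hz
    have := (Polynomial.one_lt_rootMultiplicity_iff_isRoot hf0).1 hz
    exact ⟨z, by simp [this.1.eq_zero], this.2.eq_zero⟩
end

section
/- Let f be a nonconstant complex polynomial and θ ∈ ℝ such that C_θ(f) = {z : Im(e^{-iθ} f(z)) = 0} is nonsingular (i.e., f'(z) ≠ 0 for all z ∈ C_θ(f)). Then C_θ(f) has no nonempty bounded connected component. -/
theorem stmt_17 (f : Polynomial ℂ) (hdeg : 0 < f.natDegree) (θ : ℝ)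
    (hns : ∀ z : ℂ, (Complex.exp (-(θ : ℂ) * Complex.I) * f.eval z).im = 0 →
      f.derivative.eval z ≠ 0) :
    ∀ z ∈ {w : ℂ | (Complex.exp (-(θ : ℂ) * Complex.I) * f.eval w).im = 0},
      ¬ Bornology.IsBounded
        (connectedComponentIn
          {w : ℂ | (Complex.exp (-(θ : ℂ) * Complex.I) * f.eval w).im = 0} z) := by
  intro z hz hb
  set c : ℂ := Complex.exp (-(θ : ℂ) * Complex.I) with hc
  set C : Set ℂ := {w : ℂ | (c * f.eval w).im = 0} with hCdef
  set K : Set ℂ := connectedComponentIn C z with hK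
  have hgc : Continuous fun w : ℂ => c * f.eval w :=
    continuous_const.mul f.continuous
  have hCclosed : IsClosed C :=
    isClosed_eq (Complex.continuous_im.comp hgc) continuous_const
  -- K is closed
  have hKsubC : K ⊆ C := connectedComponentIn_subset C z
  have hzK : z ∈ K := mem_connectedComponentIn hz
  have hKclosed : IsClosed K := by
    have h1 : IsPreconnected (closure K) :=
      (isPreconnected_connectedComponentIn).closure
    have h2 : closure K ⊆ C := hCclosed.closure_subset_iff.2 hKsubC
    have h3 : closure K ⊆ K :=
      h1.subset_connectedComponentIn (subset_closure hzK) h2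
    exact isClosed_of_closure_subset h3
  have hKcomp : IsCompact K := Metric.isCompact_of_isClosed_isBounded hKclosed hb
  -- maximize Re (g) on K
  obtain ⟨z₀, hz₀K, hmax⟩ := hKcomp.exists_isMaxOn ⟨z, hzK⟩
    ((Complex.continuous_re.comp hgc).continuousOn)
  have hz₀C : z₀ ∈ C := hKsubC hz₀K
  -- local inverse at z₀
  have hd : HasStrictDerivAt (fun w : ℂ => c * f.eval w)
      (c * f.derivative.eval z₀) z₀ := (f.hasStrictDerivAt z₀).const_mul c
  have hne : c * f.derivative.eval z₀ ≠ 0 :=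
    mul_ne_zero (Complex.exp_ne_zero _) (hns z₀ hz₀C)
  have hF := hd.hasStrictFDerivAt_equiv hne
  set e := hF.toOpenPartialHomeomorph (fun w : ℂ => c * f.eval w) with he
  have hcoe : ⇑e = fun w : ℂ => c * f.eval w := hF.toOpenPartialHomeomorph_coe
  have hz₀src : z₀ ∈ e.source := hF.mem_toOpenPartialHomeomorph_source
  set w0 : ℂ := c * f.eval z₀ with hw0
  have hw0t : w0 ∈ e.target := hF.image_mem_toOpenPartialHomeomorph_target
  obtain ⟨δ, hδpos, hδ⟩ := Metric.isOpen_iff.1 e.open_target w0 hw0t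
  have hw0im : w0.im = 0 := hz₀C
  -- points of the real segment are in the target
  have hseg : ∀ t ∈ Set.Icc (0:ℝ) (δ/2), w0 + (t:ℂ) ∈ e.target := by
    intro t ht
    apply hδ
    simp only [Metric.mem_ball, dist_eq_norm, add_sub_cancel_left]
    rw [Complex.norm_real, Real.norm_eq_abs, abs_of_nonneg ht.1]
    linarith [ht.2, hδpos]
  set γ : ℝ → ℂ := fun t => e.symm (w0 + (t:ℂ)) with hγ
  set A : Set ℂ := γ '' Set.Icc (0:ℝ) (δ/2) with hA
  have hγcont : ContinuousOn γ (Set.Icc (0:ℝ) (δ/2)) := by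
    apply e.continuousOn_symm.comp
    · exact (continuous_const.add Complex.continuous_ofReal).continuousOn
    · intro t ht; exact hseg t ht
  have hAconn : IsPreconnected A := isPreconnected_Icc.image γ hγcont
  have hz₀A : z₀ ∈ A := by
    refine ⟨0, ⟨le_refl _, by positivity⟩, ?_⟩
    simp only [hγ, Complex.ofReal_zero, add_zero]
    have : e z₀ = w0 := by rw [hcoe]
    rw [← this]
    exact e.left_inv hz₀src
  have hAC : A ⊆ C := by
    rintro _ ⟨t, ht, rfl⟩
    have h1 : e (e.symm (w0 + (t:ℂ))) = w0 + (t:ℂ) := e.right_inv (hseg t ht)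
    have h2 : c * f.eval (e.symm (w0 + (t:ℂ))) = w0 + (t:ℂ) := by
      simpa [hcoe] using h1
    show (c * f.eval (e.symm (w0 + (t:ℂ)))).im = 0
    rw [h2, Complex.add_im, Complex.ofReal_im, hw0im, add_zero]
  have hAK : A ⊆ K := by
    have := hAconn.subset_connectedComponentIn hz₀A hAC
    rwa [← connectedComponentIn_eq hz₀K] at this
  -- the endpoint contradicts maximality
  have hmem : γ (δ/2) ∈ K := hAK ⟨δ/2, ⟨by positivity, le_refl _⟩, rfl⟩
  have hle := hmax hmem
  have h1 : e (γ (δ/2)) = w0 + ((δ/2 : ℝ) : ℂ) :=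
    e.right_inv (hseg (δ/2) ⟨by positivity, le_refl _⟩)
  have h2 : c * f.eval (γ (δ/2)) = w0 + ((δ/2 : ℝ) : ℂ) := by
    simpa [hcoe] using h1
  have h3 : (c * f.eval (γ (δ/2))).re = w0.re + δ/2 := by
    rw [h2, Complex.add_re, Complex.ofReal_re]
  have hle' : (c * f.eval (γ (δ/2))).re ≤ (c * f.eval z₀).re := hle
  rw [h3] at hle'
  have hw0re : w0.re = (c * f.eval z₀).re := rfl
  linarith
end
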